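/- Let Φ be a differentiable function on an open neighborhood of Δ in ℝ^{M+1}, and define Ψ_Φ : (0,∞)^M → ℝ as the perspective transform Ψ_Φ(ρ) := (1 + ρ_1 + ⋯ + ρ_M) · Φ( (1, ρ_1, …, ρ_M)/(1 + ρ_1 + ⋯ + ρ_M) ). Then the Ψ_Φ-induced scoring rule satisfies, for every η ∈ Δ°: λ^{Ψ_Φ}(η) = ( ⟨η, ∇Φ(η)⟩ − Φ(η) )·𝟙 − ∇Φ(η), where 𝟙 = (1, 1, …, 1) ∈ ℝ^{M+1}; that is, λ^{Ψ_Φ}_z(η) = ⟨η, ∇Φ(η)⟩ − Φ(η) − ∂Φ/∂η_z(η) for each z = 0, 1, …, M. -/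

import Mathlib

open scoped BigOperators

/-- The interior of the standard probability simplex in `ℝ^{M+1}`. -/
def posSimplex (M : ℕ) : Set (Fin (M + 1) → ℝ) :=
  {η | (∀ i, 0 < η i) ∧ ∑ i, η i = 1}

/-- `ρ(η) = (η_1/η_0, …, η_M/η_0)`. -/
noncomputable def rhoOf (M : ℕ) (η : Fin (M + 1) → ℝ) : Fin M → ℝ :=
  fun z => η z.succ / η 0

/-- `η(ρ) = (1, ρ_1, …, ρ_M)/(1 + ρ_1 + ⋯ + ρ_M)`. -/
noncomputable def etaOfRho (M : ℕ) (ρ : Fin M → ℝ) : Fin (M + 1) → ℝ :=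
  fun i => Fin.cons (α := fun _ => ℝ) (1 : ℝ) ρ i / (1 + ∑ j, ρ j)

/-- The `Ψ`-induced scoring rule: `λ^Ψ_0(η) = ⟨ρ, ∇Ψ(ρ)⟩ − Ψ(ρ)` and
`λ^Ψ_z(η) = −(∇Ψ(ρ))_z` for `z = 1, …, M`, where `ρ = ρ(η)`. -/
noncomputable def inducedRule (M : ℕ) (Ψ : (Fin M → ℝ) → ℝ)
    (η : Fin (M + 1) → ℝ) : Fin (M + 1) → ℝ :=
  Fin.cons
    ((∑ z, rhoOf M η z * fderiv ℝ Ψ (rhoOf M η) (Pi.single z 1)) - Ψ (rhoOf M η))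
    (fun z => - fderiv ℝ Ψ (rhoOf M η) (Pi.single z 1))

section
variable (M : ℕ)

noncomputable def Scl : (Fin M → ℝ) →L[ℝ] ℝ :=
  ∑ j, ContinuousLinearMap.proj j

noncomputable def Ccl : (Fin M → ℝ) →L[ℝ] (Fin (M+1) → ℝ) :=
  ContinuousLinearMap.pi (Fin.cases 0 (fun z => ContinuousLinearMap.proj z))

@[simp] lemma Scl_apply (v : Fin M → ℝ) : Scl M v = ∑ j, v j := by
  simp [Scl]

@[simp] lemma Ccl_apply (v : Fin M → ℝ) : Ccl M v = Fin.cons 0 v := by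
  funext i
  refine Fin.cases ?_ (fun z => ?_) i <;> simp [Ccl]

lemma hasFDerivAt_ssum (ρ : Fin M → ℝ) :
    HasFDerivAt (fun ρ : Fin M → ℝ => 1 + ∑ j, ρ j) (Scl M) ρ := by
  exact (HasFDerivAt.fun_sum fun j _ => hasFDerivAt_apply j ρ).const_add 1

lemma hasFDerivAt_cons (ρ : Fin M → ℝ) :
    HasFDerivAt (fun ρ : Fin M → ℝ => Fin.cons (α := fun _ => ℝ) 1 ρ) (Ccl M) ρ := by
  apply hasFDerivAt_pi'.2
  intro i
  refine Fin.cases ?_ (fun z => ?_) i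
  · have : ((ContinuousLinearMap.proj (R := ℝ) (φ := fun _ : Fin (M+1) => ℝ) 0).comp (Ccl M)) = 0 := by
      ext v; simp
    rw [this]
    exact hasFDerivAt_const _ _
  · have : ((ContinuousLinearMap.proj (R := ℝ) (φ := fun _ : Fin (M+1) => ℝ) z.succ).comp (Ccl M))
        = ContinuousLinearMap.proj z := by
      refine ContinuousLinearMap.ext fun v => ?_
      simp
    rw [this]
    exact hasFDerivAt_apply z ρ

end

lemma cons_single (M : ℕ) (w : Fin M) :
    Fin.cons (α := fun _ => ℝ) 0 (Pi.single w 1) = Pi.single w.succ 1 := by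
  funext i
  refine Fin.cases ?_ (fun z => ?_) i
  · simp [Pi.single_apply, (Fin.succ_ne_zero w).symm]
  · simp [Pi.single_apply, Fin.succ_inj]

lemma clm_apply_eq_sum (M : ℕ) (D : (Fin (M+1) → ℝ) →L[ℝ] ℝ) (x : Fin (M+1) → ℝ) :
    D x = ∑ j, x j * D (Pi.single j 1) := by
  have hx : x = ∑ j, (x j) • Pi.single (M := fun _ => ℝ) j (1:ℝ) := by
    funext k
    simp [Pi.single_apply, Finset.sum_apply]
  conv_lhs => rw [hx]
  rw [map_sum]
  simp

lemma key (M : ℕ) (Φ : (Fin (M+1) → ℝ) → ℝ) (ρ : Fin M → ℝ)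
    (hs : (1 + ∑ j, ρ j) ≠ 0)
    (hΦ : DifferentiableAt ℝ Φ (etaOfRho M ρ)) (w : Fin M) :
    fderiv ℝ (fun ρ => (1 + ∑ j, ρ j) * Φ (etaOfRho M ρ)) ρ (Pi.single w 1)
      = Φ (etaOfRho M ρ) + fderiv ℝ Φ (etaOfRho M ρ) (Pi.single w.succ 1)
        - ∑ j, etaOfRho M ρ j * fderiv ℝ Φ (etaOfRho M ρ) (Pi.single j 1) := by
  set s : ℝ := 1 + ∑ j, ρ j with hsdef
  have hS := hasFDerivAt_ssum M ρ
  have hinv : HasFDerivAt (fun ρ : Fin M → ℝ => (1 + ∑ j, ρ j)⁻¹)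
      ((ContinuousLinearMap.smulRight (1 : ℝ →L[ℝ] ℝ) (-(s^2)⁻¹)).comp (Scl M)) ρ :=
    (hasDerivAt_inv hs).hasFDerivAt.comp ρ hS
  have hC := hasFDerivAt_cons M ρ
  have hfun : etaOfRho M = fun ρ : Fin M → ℝ =>
      ((1 + ∑ j, ρ j)⁻¹ : ℝ) • Fin.cons (α := fun _ => ℝ) 1 ρ := by
    funext ρ i
    simp [etaOfRho, div_eq_inv_mul]
  have hEta : HasFDerivAt (etaOfRho M)
      (((1 + ∑ j, ρ j)⁻¹ : ℝ) • Ccl M +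
        (((ContinuousLinearMap.smulRight (1 : ℝ →L[ℝ] ℝ) (-(s^2)⁻¹)).comp (Scl M)).smulRight
          (Fin.cons (α := fun _ => ℝ) 1 ρ))) ρ := by
    rw [hfun]
    exact hinv.smul hC
  have hΨ : HasFDerivAt (fun ρ : Fin M → ℝ => (1 + ∑ j, ρ j) * Φ (etaOfRho M ρ))
      (s • ((fderiv ℝ Φ (etaOfRho M ρ)).comp
          (((1 + ∑ j, ρ j)⁻¹ : ℝ) • Ccl M +
            (((ContinuousLinearMap.smulRight (1 : ℝ →L[ℝ] ℝ) (-(s^2)⁻¹)).comp (Scl M)).smulRight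
              (Fin.cons (α := fun _ => ℝ) 1 ρ))))
        + Φ (etaOfRho M ρ) • Scl M) ρ :=
    hS.mul (hΦ.hasFDerivAt.comp ρ hEta)
  rw [hΨ.fderiv]
  set D := fderiv ℝ Φ (etaOfRho M ρ) with hD
  have h1 : Scl M (Pi.single w 1) = 1 := by
    simp [Pi.single_apply]
  have hcons : Fin.cons (α := fun _ => ℝ) 1 ρ = s • etaOfRho M ρ := by
    funext i
    simp [etaOfRho, hsdef]
    field_simp
    exact (mul_div_cancel_right₀ _ hs).symm
  have hDeta : D (etaOfRho M ρ) = ∑ j, etaOfRho M ρ j * D (Pi.single j 1) :=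
    clm_apply_eq_sum M D _
  simp only [ContinuousLinearMap.add_apply, ContinuousLinearMap.smul_apply,
    ContinuousLinearMap.comp_apply, ContinuousLinearMap.smulRight_apply, h1, Scl_apply,
    Ccl_apply, cons_single, ContinuousLinearMap.one_apply, smul_eq_mul]
  rw [hcons]
  rw [map_add, map_smul, map_smul, map_smul]
  rw [hDeta]
  rw [← hsdef]
  set A := ∑ j, etaOfRho M ρ j * D (Pi.single j 1)
  set B := D (Pi.single w.succ 1)
  simp only [smul_eq_mul]
  field_simp
  ring


/-- for `Φ` differentiable on an open neighborhood of the simplex and the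
perspective transform `Ψ_Φ(ρ) = (1 + ∑ρ)·Φ(η(ρ))`, the `Ψ_Φ`-induced scoring rule satisfies
`λ^{Ψ_Φ}_z(η) = ⟨η, ∇Φ(η)⟩ − Φ(η) − ∂Φ/∂η_z(η)` for all `η ∈ Δ°` and all `z`. -/
theorem inducedRule_perspective_eq
    (M : ℕ) (hM : 1 ≤ M)
    (Φ : (Fin (M + 1) → ℝ) → ℝ)
    (U : Set (Fin (M + 1) → ℝ)) (hU : IsOpen U)
    (hΔU : stdSimplex ℝ (Fin (M + 1)) ⊆ U)
    (hΦ : ∀ η ∈ U, DifferentiableAt ℝ Φ η) :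
    ∀ η ∈ posSimplex M, ∀ z : Fin (M + 1),
      inducedRule M (fun ρ => (1 + ∑ j, ρ j) * Φ (etaOfRho M ρ)) η z
        = (∑ j, η j * fderiv ℝ Φ η (Pi.single j 1)) - Φ η
          - fderiv ℝ Φ η (Pi.single z 1) := by
  intro η hη z
  obtain ⟨hpos, hsum⟩ := hη
  have h0 : (0:ℝ) < η 0 := hpos 0
  have h0' : η 0 ≠ 0 := ne_of_gt h0
  have hsum' : η 0 + ∑ w : Fin M, η w.succ = 1 := by
    rw [← hsum]; exact (Fin.sum_univ_succ η).symm
  have hrsum : (1 + ∑ j, rhoOf M η j) = (η 0)⁻¹ := by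
    simp only [rhoOf]
    rw [← Finset.sum_div]
    field_simp
    linarith [hsum']
  have hsne : (1 + ∑ j, rhoOf M η j) ≠ 0 := by
    rw [hrsum]; exact inv_ne_zero h0'
  have he : etaOfRho M (rhoOf M η) = η := by
    funext i
    rw [etaOfRho, hrsum]
    refine Fin.cases ?_ (fun w => ?_) i
    · simp
    · simp [rhoOf]
      field_simp
  have hηΔ : η ∈ stdSimplex ℝ (Fin (M+1)) := ⟨fun i => (hpos i).le, hsum⟩
  have hΦη : DifferentiableAt ℝ Φ (etaOfRho M (rhoOf M η)) := by rw [he]; exact hΦ η (hΔU hηΔ)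
  have hkey := fun w => key M Φ (rhoOf M η) hsne hΦη w
  simp only [he] at hkey
  refine Fin.cases ?_ (fun w => ?_) z
  · simp only [inducedRule, Fin.cons_zero]
    simp only [hkey]
    rw [hrsum, he]
    set P := Φ η
    set A := ∑ j, η j * fderiv ℝ Φ η (Pi.single j 1) with hAdef
    set C0 := fderiv ℝ Φ η (Pi.single 0 1)
    set T := ∑ w : Fin M, η w.succ * fderiv ℝ Φ η (Pi.single w.succ 1) with hTdef
    have hA : A = η 0 * C0 + T := Fin.sum_univ_succ _
    have hstep : ∀ w : Fin M, rhoOf M η w * (P + fderiv ℝ Φ η (Pi.single w.succ 1) - A)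
        = (η w.succ * (P - A)) / η 0 + (η w.succ * fderiv ℝ Φ η (Pi.single w.succ 1)) / η 0 := by
      intro w
      simp only [rhoOf]
      field_simp
      ring
    rw [Finset.sum_congr rfl fun w _ => hstep w, Finset.sum_add_distrib,
      ← Finset.sum_div, ← Finset.sum_div, ← Finset.sum_mul, ← hTdef]
    have hsum2 : ∑ w : Fin M, η w.succ = 1 - η 0 := by linarith [hsum']
    rw [hsum2, hA]
    field_simp
    ring
  · simp only [inducedRule, Fin.cons_succ, hkey w]
    ring
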